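/- Let E be a real inner product space, let F : E → ℝ be differentiable with gradient ∇F that is L-Lipschitz (L ≥ 0), and let n ≥ 1 nodes be indexed by a finite set S of cardinality n. Let A ⊆ S be a nonempty set of accessible nodes of cardinality n₁, let w_i ∈ E for i ∈ S, let w̄ = (1/n)·Σ_{i∈S} w_i be the average of all local models, and let ŵ_A = (1/n₁)·Σ_{i∈A} w_i be the average over accessible nodes. Then the gradient of the average with inaccessibility deviates from the gradient of the full average by at most: ‖(n₁/n)·∇F(ŵ_A) + (1/n)·Σ_{i∈S\A} ∇F(w_i) − ∇F(w̄)‖ ≤ (L/n)·( n₁·‖ŵ_A − w̄‖ + Σ_{i∈S\A} ‖w_i − w̄‖ ). -/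

import Mathlib

open Finset RealInnerProductSpace

/-- Proposition 1 (weight-divergence bound): the gradient of the average with
inaccessibility deviates from the gradient of the full average by at most
`(L/n) * (n₁ * ‖ŵ_A - w̄‖ + Σ_{i ∈ S\A} ‖w_i - w̄‖)`. -/
theorem weight_divergence_bound
    {E : Type*} [NormedAddCommGroup E] [InnerProductSpace ℝ E]
    {ι : Type*} [Fintype ι] [DecidableEq ι]
    (n : ℕ) (hn : 1 ≤ n) (hcard : Fintype.card ι = n)
    (F : E → ℝ) (gradF : E → E) (L : ℝ) (hL : 0 ≤ L)
    (hdiff : ∀ x, HasFDerivAt F (innerSL ℝ (gradF x)) x)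
    (hlip : ∀ x y, ‖gradF x - gradF y‖ ≤ L * ‖x - y‖)
    (A : Finset ι) (hA : A.Nonempty)
    (w : ι → E)
    (wbar : E) (hwbar : wbar = (1 / (n : ℝ)) • ∑ i, w i)
    (whatA : E) (hwhatA : whatA = (1 / (A.card : ℝ)) • ∑ i ∈ A, w i) :
    ‖((A.card : ℝ) / n) • gradF whatA
        + (1 / (n : ℝ)) • ∑ i ∈ Aᶜ, gradF (w i) - gradF wbar‖
      ≤ (L / n) * ((A.card : ℝ) * ‖whatA - wbar‖ + ∑ i ∈ Aᶜ, ‖w i - wbar‖) := by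
  have hnpos : (0:ℝ) < n := by exact_mod_cast hn
  have hcards : (A.card : ℝ) + (Aᶜ.card : ℝ) = n := by
    have := Finset.card_add_card_compl A
    exact_mod_cast (by rw [this, hcard] : A.card + Aᶜ.card = n)
  have key : ((A.card : ℝ) / n) • gradF whatA
        + (1 / (n : ℝ)) • ∑ i ∈ Aᶜ, gradF (w i) - gradF wbar
      = (1 / (n : ℝ)) • ((A.card : ℝ) • (gradF whatA - gradF wbar)
          + ∑ i ∈ Aᶜ, (gradF (w i) - gradF wbar)) := by
    have h1 : gradF wbar = (1 / (n : ℝ)) • (((A.card : ℝ) + (Aᶜ.card : ℝ)) • gradF wbar) := by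
      rw [hcards, smul_smul]
      field_simp
      rw [one_smul]
    rw [Finset.sum_sub_distrib, Finset.sum_const, smul_sub, add_sub_assoc]
    rw [smul_add, smul_sub, smul_sub, ← Nat.cast_smul_eq_nsmul ℝ]
    conv_lhs => rw [h1]
    rw [add_smul, smul_add]
    rw [div_eq_mul_one_div, mul_comm, mul_smul]
    abel
  rw [key]
  have hstep : ‖(A.card : ℝ) • (gradF whatA - gradF wbar)
      + ∑ i ∈ Aᶜ, (gradF (w i) - gradF wbar)‖
      ≤ (A.card : ℝ) * (L * ‖whatA - wbar‖) + ∑ i ∈ Aᶜ, L * ‖w i - wbar‖ := by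
    refine le_trans (norm_add_le _ _) (add_le_add ?_ ?_)
    · rw [norm_smul, Real.norm_eq_abs, abs_of_nonneg (by positivity)]
      exact mul_le_mul_of_nonneg_left (hlip _ _) (by positivity)
    · exact le_trans (norm_sum_le _ _) (Finset.sum_le_sum fun i _ => hlip _ _)
  rw [norm_smul, Real.norm_eq_abs, abs_of_nonneg (by positivity)]
  calc 1 / (n:ℝ) * ‖(A.card : ℝ) • (gradF whatA - gradF wbar)
      + ∑ i ∈ Aᶜ, (gradF (w i) - gradF wbar)‖
      ≤ 1 / (n:ℝ) * ((A.card : ℝ) * (L * ‖whatA - wbar‖) + ∑ i ∈ Aᶜ, L * ‖w i - wbar‖) :=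
        mul_le_mul_of_nonneg_left hstep (by positivity)
    _ = (L / n) * ((A.card : ℝ) * ‖whatA - wbar‖ + ∑ i ∈ Aᶜ, ‖w i - wbar‖) := by
        rw [← Finset.mul_sum]; field_simp
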